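/- Let t be a positive integer. There exist a constant C > 0 and a positive integer N such that for every n ≥ N, every 2-edge coloring E(K_{n,n}) = R ⊔ B with at least C·n^{2−1/t} edges in each color class contains a set X of t vertices in one part of K_{n,n} and disjoint sets Y₁, Y₂ each of t vertices in the other part, together with a color c ∈ {red, blue}, such that every edge between X and Y₁ has color c and every edge between X and Y₂ has the other color (a colored copy of K_{t,2t} in which one color forms a K_{t,t}). -/

import Mathlib

set_option maxHeartbeats 1000000

open Finset

lemma total_eq {n : ℕ} (c : Fin n → Fin n → Bool) (b : Bool) :
    (Finset.univ.filter fun p : Fin n × Fin n => c p.1 p.2 = b).card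
      = ∑ v, (Finset.univ.filter fun w => c v w = b).card := by
  rw [Finset.card_filter, Fintype.sum_prod_type]
  exact Finset.sum_congr rfl fun v _ => (Finset.card_filter _ _).symm

lemma sum_choose_eq {α : Type*} [Fintype α] [DecidableEq α] (t : ℕ) (Q : Finset α)
    (Nv : α → Finset α) (hN : ∀ v, Nv v ⊆ Q) :
    ∑ v, ((Nv v).card.choose t)
      = ∑ U ∈ Q.powersetCard t, (Finset.univ.filter fun v => U ⊆ Nv v).card := by
  have h1 : ∀ v, (Nv v).card.choose t
      = ((Q.powersetCard t).filter fun U => U ⊆ Nv v).card := by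
    intro v
    rw [← Finset.card_powersetCard]
    congr 1
    ext U
    simp only [Finset.mem_powersetCard, Finset.mem_filter]
    exact ⟨fun ⟨h, h2⟩ => ⟨⟨h.trans (hN v), h2⟩, h⟩, fun ⟨⟨_, h2⟩, h⟩ => ⟨h, h2⟩⟩
  simp only [h1, Finset.card_filter]
  exact Finset.sum_comm

lemma avg_choose {n t : ℕ} (ht : 0 < t) (hn : 0 < n) (d : Fin n → ℕ) (A : ℝ)
    (hA : 2 * t ≤ A) (hsum : A * n ≤ ∑ v, (d v : ℝ)) :
    (n : ℝ) * (A / 2) ^ t ≤ ∑ v, ((d v).choose t * t.factorial : ℝ) := by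
  have hA0 : (0:ℝ) ≤ A := le_trans (by positivity) hA
  set f : Fin n → ℕ := fun v => d v + 1 - t with hf
  have hstep1 : ∀ v, ((f v : ℝ)) ^ t ≤ ((d v).choose t * t.factorial : ℝ) := by
    intro v
    have h1 : (f v) ^ t ≤ (d v).descFactorial t := Nat.pow_sub_le_descFactorial (d v) t
    have h2 : (d v).descFactorial t = t.factorial * (d v).choose t :=
      Nat.descFactorial_eq_factorial_mul_choose _ _
    rw [h2] at h1
    exact_mod_cast h1.trans_eq (Nat.mul_comm _ _)
  have hfs : (A / 2) * n ≤ ∑ v, (f v : ℝ) := by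
    have h3 : ∀ v, (d v : ℝ) ≤ (f v : ℝ) + t := by
      intro v
      have : d v ≤ f v + t := by simp only [hf]; omega
      exact_mod_cast this
    have h4 : ∑ v, (d v : ℝ) ≤ (∑ v, (f v : ℝ)) + n * t := by
      calc ∑ v, (d v : ℝ) ≤ ∑ v, ((f v : ℝ) + t) := Finset.sum_le_sum fun v _ => h3 v
        _ = (∑ v, (f v : ℝ)) + n * t := by
            rw [Finset.sum_add_distrib]; simp [Finset.card_univ, mul_comm]
    have ht2 : (t : ℝ) ≤ A / 2 := by linarith
    nlinarith [show (0:ℝ) < n from by exact_mod_cast hn]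
  -- power mean
  obtain ⟨t', rfl⟩ : ∃ t', t = t' + 1 := ⟨t - 1, by omega⟩
  have hpm := pow_sum_div_card_le_sum_pow (s := (Finset.univ : Finset (Fin n)))
    (f := fun v => (f v : ℝ)) (fun i _ => by positivity) t'
  rw [Finset.card_univ, Fintype.card_fin] at hpm
  have hn' : (0:ℝ) < n := by exact_mod_cast hn
  have hmono : ((A/2) * n) ^ (t' + 1) ≤ (∑ v, (f v : ℝ)) ^ (t' + 1) :=
    pow_le_pow_left₀ (by positivity) hfs _
  have hkey : (n : ℝ) * (A / 2) ^ (t' + 1) ≤ ∑ v, (f v : ℝ) ^ (t' + 1) := by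
    have heq : (n : ℝ) * (A / 2) ^ (t' + 1) = ((A/2) * n) ^ (t' + 1) / (n:ℝ) ^ t' := by
      field_simp
      ring
    rw [heq]
    refine le_trans ?_ hpm
    exact div_le_div_of_nonneg_right hmono (by positivity) |>.trans_eq rfl
  calc (n : ℝ) * (A / 2) ^ (t' + 1) ≤ ∑ v, (f v : ℝ) ^ (t' + 1) := hkey
    _ ≤ ∑ v, ((d v).choose (t'+1) * (t'+1).factorial : ℝ) :=
        Finset.sum_le_sum fun v _ => hstep1 v

open Finset
section
variable {n t : ℕ}

lemma kst (ht : 0 < t) (hn : 0 < n) (Q : Finset (Fin n)) (hQt : t ≤ Q.card)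
    (Nv : Fin n → Finset (Fin n)) (hN : ∀ v, Nv v ⊆ Q) (A : ℝ) (hA : 2 * t ≤ A)
    (hsum : A * n ≤ ∑ v, ((Nv v).card : ℝ)) :
    ∃ U, U ⊆ Q ∧ U.card = t ∧
      (n : ℝ) * (A / 2) ^ t ≤
        ((Finset.univ.filter fun v => U ⊆ Nv v).card : ℝ) * (n : ℝ) ^ t := by
  have hpc : (Q.powersetCard t).Nonempty := Finset.powersetCard_nonempty.mpr hQt
  obtain ⟨U, hUpc, hUmax⟩ := Finset.exists_max_image (Q.powersetCard t)
    (fun U => (Finset.univ.filter fun v => U ⊆ Nv v).card) hpc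
  rw [Finset.mem_powersetCard] at hUpc
  refine ⟨U, hUpc.1, hUpc.2, ?_⟩
  set cnt := (Finset.univ.filter fun v => U ⊆ Nv v).card with hcnt
  have hid := sum_choose_eq t Q Nv hN
  have hle : ∑ v, ((Nv v).card.choose t) ≤ Q.card.choose t * cnt := by
    rw [hid]
    calc ∑ V ∈ Q.powersetCard t, (Finset.univ.filter fun v => V ⊆ Nv v).card
        ≤ (Q.powersetCard t).card • cnt :=
          Finset.sum_le_card_nsmul _ _ _ (fun V hV => hUmax V hV)
      _ = Q.card.choose t * cnt := by rw [Finset.card_powersetCard, smul_eq_mul]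
  have hQn : Q.card ≤ n := le_trans (Finset.card_le_univ Q) (by simp)
  have hle2 : (∑ v, ((Nv v).card.choose t)) * t.factorial ≤ cnt * n ^ t := by
    calc (∑ v, ((Nv v).card.choose t)) * t.factorial
        ≤ (Q.card.choose t * cnt) * t.factorial := Nat.mul_le_mul_right _ hle
      _ = cnt * (t.factorial * Q.card.choose t) := by ring
      _ = cnt * Q.card.descFactorial t := by
          rw [Nat.descFactorial_eq_factorial_mul_choose]
      _ ≤ cnt * Q.card ^ t := Nat.mul_le_mul_left _ (Nat.descFactorial_le_pow _ _)
      _ ≤ cnt * n ^ t := Nat.mul_le_mul_left _ (Nat.pow_le_pow_left hQn _)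
  have havg := avg_choose ht hn (fun v => (Nv v).card) A hA hsum
  calc (n : ℝ) * (A / 2) ^ t ≤ ∑ v, (((Nv v).card.choose t) * t.factorial : ℝ) := havg
    _ = ((∑ v, ((Nv v).card.choose t)) * t.factorial : ℕ) := by push_cast; rw [Finset.sum_mul]
    _ ≤ ((cnt * n ^ t : ℕ) : ℝ) := by exact_mod_cast hle2
    _ = (cnt : ℝ) * (n : ℝ) ^ t := by push_cast; ring

lemma ypow (hn : 0 < n) (ht : 0 < t) :
    ((n:ℝ) ^ ((1:ℝ) - 1/t)) ^ t = (n:ℝ) ^ (t - 1) := by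
  have hn' : (0:ℝ) < n := by exact_mod_cast hn
  have ht' : (0:ℝ) < t := by exact_mod_cast ht
  have ht1 : (1:ℝ) ≤ t := by exact_mod_cast ht
  rw [← Real.rpow_natCast ((n:ℝ) ^ ((1:ℝ) - 1/t)) t, ← Real.rpow_mul hn'.le,
    ← Real.rpow_natCast (n:ℝ) (t-1)]
  congr 1
  have : ((t - 1 : ℕ) : ℝ) = (t:ℝ) - 1 := by
    push_cast [Nat.cast_sub ht]
    ring
  rw [this]
  field_simp
end



/-- The number of red edges in a 2-edge coloring of `K_{n,n}`.  The coloring is encoded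
as `c : Fin n → Fin n → Bool`, where `c v w = true` means that the edge between vertex `v`
of the first part and vertex `w` of the second part is red, and `c v w = false` means it
is blue. -/
def redTotal {n : ℕ} (c : Fin n → Fin n → Bool) : ℕ :=
  (Finset.univ.filter fun p : Fin n × Fin n => c p.1 p.2 = true).card

/-- The number of blue edges in a 2-edge coloring of `K_{n,n}`. -/
def blueTotal {n : ℕ} (c : Fin n → Fin n → Bool) : ℕ :=
  (Finset.univ.filter fun p : Fin n × Fin n => c p.1 p.2 = false).card

/-- `hasPattern c a b₁ b₂` says: the 2-edge coloring `c` of `K_{n,n}` contains a set `X` of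
`a` vertices in one part and disjoint sets `Y₁` (of `b₁` vertices) and `Y₂` (of `b₂`
vertices) in the other part, together with a color `col`, such that every edge between `X`
and `Y₁` has color `col` and every edge between `X` and `Y₂` has the other color.
This is a colored copy of `K_{a, b₁ + b₂}` in which one color forms a `K_{a,b₁}`. -/
def hasPattern {n : ℕ} (c : Fin n → Fin n → Bool) (a b₁ b₂ : ℕ) : Prop :=
  ∃ (X Y₁ Y₂ : Finset (Fin n)) (col : Bool),
    X.card = a ∧ Y₁.card = b₁ ∧ Y₂.card = b₂ ∧ Disjoint Y₁ Y₂ ∧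
      (((∀ x ∈ X, ∀ y ∈ Y₁, c x y = col) ∧ (∀ x ∈ X, ∀ y ∈ Y₂, c x y = !col)) ∨
       ((∀ x ∈ X, ∀ y ∈ Y₁, c y x = col) ∧ (∀ x ∈ X, ∀ y ∈ Y₂, c y x = !col)))

/-- For every positive integer `t` there are `C > 0` and `N` such that for all `n ≥ N`,
any 2-edge coloring of `K_{n,n}` with at least `C·n^(2-1/t)` edges in each color class
contains a colored copy of `K_{t,2t}` in which one color forms a `K_{t,t}`: a set `X` of
`t` vertices in one part and disjoint sets `Y₁, Y₂` of `t` vertices each in the other part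
such that all `X`–`Y₁` edges get one color and all `X`–`Y₂` edges get the other color. -/
theorem unavoidable_pattern_Ktt (t : ℕ) (ht : 0 < t) :
    ∃ (C : ℝ) (N : ℕ), 0 < C ∧ 0 < N ∧
      ∀ n : ℕ, N ≤ n → ∀ c : Fin n → Fin n → Bool,
        C * (n : ℝ) ^ ((2 : ℝ) - 1 / (t : ℝ)) ≤ (redTotal c : ℝ) →
        C * (n : ℝ) ^ ((2 : ℝ) - 1 / (t : ℝ)) ≤ (blueTotal c : ℝ) →
        hasPattern c t t t := by
  classical
  obtain ⟨q, hq, hqt⟩ : ∃ q, q = t * t ∧ t ≤ q :=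
    ⟨t * t, rfl, Nat.le_mul_of_pos_left t ht⟩
  obtain ⟨K0, hK0⟩ : ∃ K0, K0 = (t - 1) * (4 * t) ^ t := ⟨_, rfl⟩
  set Cn : ℕ := 20 * q + 2 * K0 + 4 * t with hCn
  refine ⟨(Cn : ℝ), Cn + K0 + t + 1, by positivity, by omega, ?_⟩
  intro n hn c hred hblue
  have hn0 : 0 < n := by omega
  have hn' : (0:ℝ) < n := by exact_mod_cast hn0
  have ht1 : (1:ℝ) ≤ t := by exact_mod_cast ht
  have ht' : (0:ℝ) < t := by exact_mod_cast ht
  set y := (n:ℝ) ^ ((1:ℝ) - 1/(t:ℝ)) with hy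
  have hy1 : (1:ℝ) ≤ y := by
    apply Real.one_le_rpow (by exact_mod_cast hn0)
    have h1 : (1:ℝ)/t ≤ 1 := by
      rw [div_le_one ht']; exact_mod_cast ht
    linarith
  have hy0 : (0:ℝ) < y := lt_of_lt_of_le one_pos hy1
  have hxy : (n:ℝ) ^ ((2:ℝ) - 1/(t:ℝ)) = y * n := by
    rw [hy, show (2:ℝ) - 1/(t:ℝ) = ((1:ℝ) - 1/(t:ℝ)) + 1 by ring, Real.rpow_add hn',
      Real.rpow_one]
  have hyt : y ^ t = (n:ℝ) ^ (t-1) := ypow hn0 ht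
  have hnt : (n:ℝ) ^ (t-1) * n = (n:ℝ) ^ t := by
    rw [← pow_succ]; congr 1; omega
  have hCt4 : 4 * t ≤ Cn := by omega
  have hC1 : (1:ℝ) ≤ (Cn:ℝ)/2 := by
    have : (2:ℕ) ≤ Cn := by omega
    have := (Nat.cast_le (α := ℝ)).mpr this
    push_cast at this; linarith
  -- STEP 1 : a red K_{t, ℓ}
  set NvR : Fin n → Finset (Fin n) := fun v => univ.filter fun w => c v w = true with hNvR
  have hA1 : 2*(t:ℝ) ≤ (Cn:ℝ) * y := by
    have h1 : (2*t:ℕ) ≤ Cn := by omega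
    have h2 := (Nat.cast_le (α := ℝ)).mpr h1
    push_cast at h2
    calc 2*(t:ℝ) ≤ (Cn:ℝ) := h2
      _ ≤ (Cn:ℝ) * y := le_mul_of_one_le_right (by positivity) hy1
  have hsum1 : (Cn:ℝ) * y * n ≤ ∑ v, ((NvR v).card : ℝ) := by
    have hr : (redTotal c : ℝ) = ∑ v, ((NvR v).card : ℝ) := by
      rw [redTotal, total_eq c true]; push_cast; rfl
    rw [← hr]
    calc (Cn:ℝ) * y * n = (Cn:ℝ) * ((n:ℝ) ^ ((2:ℝ) - 1/(t:ℝ))) := by rw [hxy]; ring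
      _ ≤ redTotal c := hred
  obtain ⟨U₁, hU₁Q, hU₁c, hcnt1⟩ := kst ht hn0 univ
    (by rw [Finset.card_univ, Fintype.card_fin]; omega) NvR
    (fun v => Finset.subset_univ _) ((Cn:ℝ)*y) hA1 hsum1
  set L₂ := (univ.filter fun v => U₁ ⊆ NvR v) with hL₂
  set ℓ := L₂.card with hℓ
  have hred2 : ∀ v ∈ L₂, ∀ w ∈ U₁, c v w = true := by
    intro v hv w hw
    rw [hL₂, Finset.mem_filter] at hv
    have := hv.2 hw
    rw [hNvR, Finset.mem_filter] at this
    exact this.2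
  have hl1 : ((Cn:ℝ)/2)^t ≤ (ℓ:ℝ) := by
    have hchain : ((Cn:ℝ)/2)^t * (n:ℝ)^t ≤ (ℓ:ℝ) * (n:ℝ)^t := by
      calc ((Cn:ℝ)/2)^t * (n:ℝ)^t = (n:ℝ) * (((Cn:ℝ)/2) * y)^t := by
            rw [mul_pow, hyt, ← hnt]; ring
        _ = (n:ℝ) * (((Cn:ℝ) * y)/2)^t := by ring_nf
        _ ≤ (ℓ:ℝ) * (n:ℝ)^t := hcnt1
    exact le_of_mul_le_mul_right hchain (by positivity)
  have hl4q : 4*q ≤ ℓ := by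
    have h1 : ((4*q:ℕ):ℝ) ≤ (ℓ:ℝ) := by
      refine le_trans ?_ hl1
      have h2 : (8*q : ℕ) ≤ Cn := by omega
      have h3 := (Nat.cast_le (α := ℝ)).mpr h2
      push_cast at h3 ⊢
      calc 4*(q:ℝ) ≤ (Cn:ℝ)/2 := by linarith
        _ ≤ ((Cn:ℝ)/2)^t := le_self_pow₀ (by linarith) ht.ne'
    exact_mod_cast h1
  -- STEP 2
  set NwB : Fin n → Finset (Fin n) := fun w => L₂.filter fun v => c v w = false with hNwB
  by_cases hbr : ∃ V ∈ L₂.powersetCard t, t ≤ (univ.filter fun w => V ⊆ NwB w).card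
  · -- pattern on the left side
    obtain ⟨V, hVpc, hVcnt⟩ := hbr
    rw [Finset.mem_powersetCard] at hVpc
    obtain ⟨Y₁, hY₁sub, hY₁c⟩ := Finset.exists_subset_card_eq hVcnt
    obtain ⟨x₀, hx₀⟩ := Finset.card_pos.mp (show 0 < V.card by rw [hVpc.2]; exact ht)
    have hblueV : ∀ y ∈ Y₁, ∀ x ∈ V, c x y = false := by
      intro y hy x hx
      have h1 := hY₁sub hy
      rw [Finset.mem_filter] at h1
      have h2 := h1.2 hx
      rw [hNwB, Finset.mem_filter] at h2
      exact h2.2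
    refine ⟨V, Y₁, U₁, false, hVpc.2, hY₁c, hU₁c, ?_, Or.inl ⟨?_, ?_⟩⟩
    · rw [Finset.disjoint_left]
      intro a haY₁ haU₁
      have h1 : c x₀ a = false := hblueV a haY₁ x₀ hx₀
      have h2 : c x₀ a = true := hred2 x₀ (hVpc.1 hx₀) a haU₁
      rw [h1] at h2; exact Bool.false_ne_true h2
    · intro x hx y hy; exact hblueV y hy x hx
    · intro x hx y hy
      simp only [Bool.not_false]
      exact hred2 x (hVpc.1 hx) y hy
  · -- no blue-rich t-subset of L₂ : bound the bad columns
    push_neg at hbr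
    have hsum2 : ∑ w, ((NwB w).card.choose t) ≤ (t-1) * ℓ.choose t := by
      rw [sum_choose_eq t L₂ NwB (fun w => Finset.filter_subset _ _)]
      calc ∑ V ∈ L₂.powersetCard t, (univ.filter fun w => V ⊆ NwB w).card
          ≤ (L₂.powersetCard t).card • (t-1) :=
            Finset.sum_le_card_nsmul _ _ _ (fun V hV => by have := hbr V hV; omega)
        _ = (t-1) * ℓ.choose t := by
            rw [Finset.card_powersetCard, smul_eq_mul, Nat.mul_comm]
    set s := ℓ/(2*t) with hs
    have h2t0 : 0 < 2*t := by omega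
    have hts2t : 2*t ≤ s := by
      rw [hs]
      rw [Nat.le_div_iff_mul_le h2t0]
      nlinarith [hl4q, hq]
    set Bad := (univ.filter fun w => s ≤ (NwB w).card) with hBad
    have hBadchoose : Bad.card * s.choose t ≤ (t-1) * ℓ.choose t := by
      calc Bad.card * s.choose t = ∑ _w ∈ Bad, s.choose t := by
            rw [Finset.sum_const, smul_eq_mul, Nat.mul_comm]
        _ ≤ ∑ w ∈ Bad, ((NwB w).card.choose t) := by
            refine Finset.sum_le_sum fun w hw => Nat.choose_le_choose t ?_
            rw [hBad, Finset.mem_filter] at hw; exact hw.2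
        _ ≤ ∑ w, ((NwB w).card.choose t) :=
            Finset.sum_le_sum_of_subset (Finset.subset_univ _)
        _ ≤ (t-1) * ℓ.choose t := hsum2
    set u := s + 1 - t with hu
    have hu1 : 1 ≤ u := by omega
    have hlu : ℓ ≤ 4*t*u := by
      have h1 : ℓ < (s+1) * (2*t) := by
        rw [← Nat.div_lt_iff_lt_mul h2t0]
        omega
      have h3 : s + 1 = u + t := by omega
      rw [h3] at h1
      have h1' : ℓ < 2*(t*u) + 2*q := by
        calc ℓ < (u+t)*(2*t) := h1
          _ = 2*(t*u) + 2*(t*t) := by ring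
          _ = 2*(t*u) + 2*q := by rw [hq]
      have hgoal : ℓ ≤ 4*(t*u) := by linarith [hl4q, h1']
      calc ℓ ≤ 4*(t*u) := hgoal
        _ = 4*t*u := by ring
    have hBadK : Bad.card ≤ K0 := by
      have cA : u^t ≤ s.choose t * t.factorial := by
        have h1 := Nat.pow_sub_le_descFactorial s t
        rw [Nat.descFactorial_eq_factorial_mul_choose, Nat.mul_comm] at h1
        exact h1
      have cB : ℓ.choose t * t.factorial ≤ ℓ^t := by
        have h1 := Nat.descFactorial_le_pow ℓ t
        rw [Nat.descFactorial_eq_factorial_mul_choose, Nat.mul_comm] at h1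
        exact h1
      have c2 : Bad.card * u^t ≤ (t-1) * ℓ^t := by
        calc Bad.card * u^t ≤ Bad.card * (s.choose t * t.factorial) :=
              Nat.mul_le_mul_left _ cA
          _ = (Bad.card * s.choose t) * t.factorial := by ring
          _ ≤ ((t-1) * ℓ.choose t) * t.factorial := Nat.mul_le_mul_right _ hBadchoose
          _ = (t-1) * (ℓ.choose t * t.factorial) := by ring
          _ ≤ (t-1) * ℓ^t := Nat.mul_le_mul_left _ cB
      have c4 : Bad.card * u^t ≤ K0 * u^t := by
        calc Bad.card * u^t ≤ (t-1) * ℓ^t := c2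
          _ ≤ (t-1) * ((4*t*u)^t) := Nat.mul_le_mul_left _ (Nat.pow_le_pow_left hlu t)
          _ = K0 * u^t := by rw [hK0, mul_pow]; ring
      exact Nat.le_of_mul_le_mul_right c4 (Nat.pow_pos (by omega))
    -- STEP 3
    set Good := (univ : Finset (Fin n)) \ Bad with hGood
    have hGoodcard : Good.card = n - Bad.card := by
      rw [hGood, Finset.card_sdiff_of_subset (Finset.subset_univ _), Finset.card_univ,
        Fintype.card_fin]
    have hGoodmem : ∀ w ∈ Good, (NwB w).card < s := by
      intro w hw
      rw [hGood, Finset.mem_sdiff, hBad, Finset.mem_filter] at hw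
      have h1 := hw.2
      push_neg at h1
      exact h1 (Finset.mem_univ w)
    set N3 : Fin n → Finset (Fin n) := fun v => Good.filter fun w => c v w = false with hN3
    have hsum3 : ((Cn:ℝ)/2) * y * n ≤ ∑ v, ((N3 v).card : ℝ) := by
      have hnat : blueTotal c ≤ (∑ v, (N3 v).card) + n * Bad.card := by
        rw [blueTotal, total_eq c false]
        have hv : ∀ v : Fin n, (univ.filter fun w => c v w = false).card
            ≤ (N3 v).card + Bad.card := by
          intro v
          have hsub : (univ.filter fun w => c v w = false) ⊆ (N3 v) ∪ Bad := by
            intro w hw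
            rw [Finset.mem_filter] at hw
            by_cases hwb : w ∈ Bad
            · exact Finset.mem_union_right _ hwb
            · refine Finset.mem_union_left _ ?_
              rw [hN3, Finset.mem_filter]
              exact ⟨Finset.mem_sdiff.mpr ⟨Finset.mem_univ w, hwb⟩, hw.2⟩
          calc (univ.filter fun w => c v w = false).card
              ≤ ((N3 v) ∪ Bad).card := Finset.card_le_card hsub
            _ ≤ (N3 v).card + Bad.card := Finset.card_union_le _ _
        calc ∑ v, (univ.filter fun w => c v w = false).card
            ≤ ∑ v : Fin n, ((N3 v).card + Bad.card) := Finset.sum_le_sum fun v _ => hv v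
          _ = (∑ v, (N3 v).card) + n * Bad.card := by
              rw [Finset.sum_add_distrib, Finset.sum_const, Finset.card_univ,
                Fintype.card_fin, smul_eq_mul]
      have hblue' : (Cn:ℝ) * y * n ≤ (blueTotal c : ℝ) := by
        calc (Cn:ℝ) * y * n = (Cn:ℝ) * ((n:ℝ) ^ ((2:ℝ) - 1/(t:ℝ))) := by rw [hxy]; ring
          _ ≤ blueTotal c := hblue
      have hnat' : (blueTotal c : ℝ) ≤ (∑ v, ((N3 v).card:ℝ)) + n * Bad.card := by
        exact_mod_cast hnat
      have hBK : (Bad.card : ℝ) ≤ (K0:ℝ) := by exact_mod_cast hBadK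
      have hKC : (K0:ℝ) ≤ ((Cn:ℝ)/2) * y := by
        have h1 : (2*K0 : ℕ) ≤ Cn := by omega
        have h2 := (Nat.cast_le (α := ℝ)).mpr h1
        push_cast at h2
        calc (K0:ℝ) ≤ (Cn:ℝ)/2 := by linarith
          _ ≤ ((Cn:ℝ)/2) * y := le_mul_of_one_le_right (by positivity) hy1
      have h5 : (n:ℝ) * Bad.card ≤ (n:ℝ) * (((Cn:ℝ)/2) * y) := by
        apply mul_le_mul_of_nonneg_left (le_trans hBK hKC) hn'.le
      linarith [hblue', hnat', h5]
    have hA3 : 2*(t:ℝ) ≤ ((Cn:ℝ)/2) * y := by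
      have h1 : (4*t:ℕ) ≤ Cn := hCt4
      have h2 := (Nat.cast_le (α := ℝ)).mpr h1
      push_cast at h2
      calc 2*(t:ℝ) ≤ (Cn:ℝ)/2 := by linarith
        _ ≤ ((Cn:ℝ)/2) * y := le_mul_of_one_le_right (by positivity) hy1
    obtain ⟨U₂, hU₂G, hU₂c, hcnt2⟩ := kst ht hn0 Good
      (by rw [hGoodcard]; omega) N3 (fun v => Finset.filter_subset _ _)
      (((Cn:ℝ)/2)*y) hA3 hsum3
    have hcnt2t : t ≤ (univ.filter fun v => U₂ ⊆ N3 v).card := by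
      have h1 : ((t:ℝ)) * (n:ℝ)^t ≤ ((univ.filter fun v => U₂ ⊆ N3 v).card : ℝ) * (n:ℝ)^t := by
        calc (t:ℝ) * (n:ℝ)^t ≤ ((Cn:ℝ)/4)^t * (n:ℝ)^t := by
              apply mul_le_mul_of_nonneg_right ?_ (by positivity)
              have h2 : (4*t:ℕ) ≤ Cn := hCt4
              have h3 := (Nat.cast_le (α := ℝ)).mpr h2
              push_cast at h3
              calc (t:ℝ) ≤ (Cn:ℝ)/4 := by linarith
                _ ≤ ((Cn:ℝ)/4)^t := le_self_pow₀ (by linarith) ht.ne'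
          _ = (n:ℝ) * ((((Cn:ℝ)/2) * y)/2)^t := by
              rw [show (((Cn:ℝ)/2) * y)/2 = ((Cn:ℝ)/4) * y by ring, mul_pow, hyt, ← hnt]
              ring
          _ ≤ _ := hcnt2
      have h2 := le_of_mul_le_mul_right h1 (by positivity : (0:ℝ) < (n:ℝ)^t)
      exact_mod_cast h2
    obtain ⟨Y₁, hY₁sub, hY₁c⟩ := Finset.exists_subset_card_eq hcnt2t
    set Z := L₂.filter (fun v => ∀ w ∈ U₂, c v w = true) with hZ
    have hZcard : t ≤ Z.card := by
      have hsub : L₂ \ Z ⊆ U₂.biUnion (fun w => NwB w) := by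
        intro v hv
        rw [Finset.mem_sdiff] at hv
        have h1 : ¬ (∀ w ∈ U₂, c v w = true) := by
          intro h
          exact hv.2 (by rw [hZ, Finset.mem_filter]; exact ⟨hv.1, h⟩)
        push_neg at h1
        obtain ⟨w, hw, hcvw⟩ := h1
        refine Finset.mem_biUnion.mpr ⟨w, hw, ?_⟩
        rw [hNwB, Finset.mem_filter]
        exact ⟨hv.1, by simpa using hcvw⟩
      have hcard1 : (L₂ \ Z).card ≤ t * s := by
        calc (L₂ \ Z).card ≤ (U₂.biUnion (fun w => NwB w)).card := Finset.card_le_card hsub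
          _ ≤ ∑ w ∈ U₂, (NwB w).card := Finset.card_biUnion_le
          _ ≤ U₂.card • s := Finset.sum_le_card_nsmul _ _ _
              (fun w hw => le_of_lt (hGoodmem w (hU₂G hw)))
          _ = t * s := by rw [hU₂c, smul_eq_mul]
      have hcard2 : (L₂ \ Z).card = ℓ - Z.card :=
        Finset.card_sdiff_of_subset (Finset.filter_subset _ _)
      have hts2 : t * s ≤ ℓ/2 := by
        calc t * s ≤ t * ℓ / (2*t) := Nat.mul_div_le_mul_div_assoc _ _ _
          _ = ℓ / 2 := by rw [show 2*t = t*2 by ring, Nat.mul_div_mul_left ℓ 2 ht]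
      obtain ⟨m, hm1, hm2⟩ : ∃ m, (L₂ \ Z).card ≤ m ∧ m ≤ ℓ/2 := ⟨t*s, hcard1, hts2⟩
      omega
    obtain ⟨Y₂, hY₂sub, hY₂c⟩ := Finset.exists_subset_card_eq hZcard
    obtain ⟨w₀, hw₀⟩ := Finset.card_pos.mp (show 0 < U₂.card by rw [hU₂c]; exact ht)
    have hblueY₁ : ∀ y ∈ Y₁, ∀ x ∈ U₂, c y x = false := by
      intro y hy x hx
      have h1 := hY₁sub hy
      rw [Finset.mem_filter] at h1
      have h2 := h1.2 hx
      rw [hN3, Finset.mem_filter] at h2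
      exact h2.2
    have hredY₂ : ∀ y ∈ Y₂, ∀ x ∈ U₂, c y x = true := by
      intro y hy x hx
      have h1 := hY₂sub hy
      rw [hZ, Finset.mem_filter] at h1
      exact h1.2 x hx
    refine ⟨U₂, Y₁, Y₂, false, hU₂c, hY₁c, hY₂c, ?_, Or.inr ⟨?_, ?_⟩⟩
    · rw [Finset.disjoint_left]
      intro a haY₁ haY₂
      have h1 : c a w₀ = false := hblueY₁ a haY₁ w₀ hw₀
      have h2 : c a w₀ = true := hredY₂ a haY₂ w₀ hw₀
      rw [h1] at h2; exact Bool.false_ne_true h2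
    · intro x hx y hy; exact hblueY₁ y hy x hx
    · intro x hx y hy
      simp only [Bool.not_false]
      exact hredY₂ y hy x hx
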